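/- Let G be a game with no cycle of total weight zero, let F be a set of vertices containing N = N_G such that the supΣ^N-value is finite on F, let H be the subgame obtained by removing F from G (assumed to be a subgame), let φ_H be a reducing potential for H, and assume H^+ = ZP_{φ_H} is empty and H^- = ZN_{φ_H} is nonempty. Let vv' be an edge from H^- ∩ V_Max to F maximising w(vv') + supΣ^N-value(v') − φ_H(v). Then supΣ^N-value(v) = supΣ^N-value(v') + w(vv'). -/

import Mathlib

/-!
Basic definitions for mean-payoff games: games, infinite paths, positional
strategies, the valuations MP, supΣ^X and infΣ^X, values of vertices,
zones N, P, ZN, ZP (also relative to a sub-arena), reduced games,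
potentials and potential reductions, traps.
-/

/-- A game: a sinkless directed graph with integer weights, whose vertices are
partitioned into Min-vertices (`IsMin`) and Max-vertices (`¬ IsMin`). -/
structure MPGame (V : Type*) where
  E : V → V → Prop
  w : V → V → ℤ
  IsMin : V → Prop
  sinkless : ∀ v, ∃ v', E v v'

namespace MPGame

variable {V : Type*}

/-- An infinite path in a game. -/
structure Path (G : MPGame V) where
  vert : ℕ → V
  adj : ∀ i, G.E (vert i) (vert (i + 1))

/-- The sum of the weights of the first `k` edges of a path. -/
def Path.wsum {G : MPGame V} (π : G.Path) (k : ℕ) : ℤ :=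
  ∑ i ∈ Finset.range k, G.w (π.vert i) (π.vert (i + 1))

/-- The tail of a path (drop the first vertex). -/
def Path.tail {G : MPGame V} (π : G.Path) : G.Path :=
  ⟨fun i => π.vert (i + 1), fun i => π.adj (i + 1)⟩

/-- A positional strategy `σ : V → V` is legal if it always follows an edge. -/
def Legal (G : MPGame V) (σ : V → V) : Prop := ∀ v, G.E v (σ v)

/-- Consistency of a path with a positional Min-strategy. -/
def Path.ConsMin {G : MPGame V} (π : G.Path) (σ : V → V) : Prop :=
  ∀ i, G.IsMin (π.vert i) → π.vert (i + 1) = σ (π.vert i)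

/-- Consistency of a path with a positional Max-strategy. -/
def Path.ConsMax {G : MPGame V} (π : G.Path) (τ : V → V) : Prop :=
  ∀ i, ¬ G.IsMin (π.vert i) → π.vert (i + 1) = τ (π.vert i)

/-- The mean-payoff valuation `MP(π) = limsup_k (1/k) ∑_{i<k} w_i`. -/
noncomputable def MP {G : MPGame V} (π : G.Path) : EReal :=
  Filter.limsup (fun k => (((π.wsum k : ℝ) / (k : ℝ)) : EReal)) Filter.atTop

/-- `supΣ^X(π) = sup_{k ≤ n_X} ∑_{i<k} w_i`, where `n_X` is the first hitting
time of `X` (all `k` if `X` is never hit). -/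
noncomputable def supSigma {G : MPGame V} (X : Set V) (π : G.Path) : EReal :=
  ⨆ k : {k : ℕ // ∀ i < k, π.vert i ∉ X}, ((π.wsum k.1 : ℝ) : EReal)

/-- `infΣ^X(π) = inf_{k ≤ n_X} ∑_{i<k} w_i`. -/
noncomputable def infSigma {G : MPGame V} (X : Set V) (π : G.Path) : EReal :=
  ⨅ k : {k : ℕ // ∀ i < k, π.vert i ∉ X}, ((π.wsum k.1 : ℝ) : EReal)

/-- `inf_σ sup_{π ⊨ σ, π from v} val(π)`, over legal positional Min-strategies. -/
noncomputable def minVal (G : MPGame V) (val : G.Path → EReal) (v : V) : EReal :=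
  ⨅ σ : {σ : V → V // G.Legal σ},
    ⨆ π : {π : G.Path // π.vert 0 = v ∧ π.ConsMin σ.1}, val π.1

/-- `sup_τ inf_{π ⊨ τ, π from v} val(π)`, over legal positional Max-strategies. -/
noncomputable def maxVal (G : MPGame V) (val : G.Path → EReal) (v : V) : EReal :=
  ⨆ τ : {τ : V → V // G.Legal τ},
    ⨅ π : {π : G.Path // π.vert 0 = v ∧ π.ConsMax τ.1}, val π.1

/-- The MP-value of a vertex. -/
noncomputable def MPval (G : MPGame V) (v : V) : EReal := G.minVal MP v

/-- The `supΣ^X`-value of a vertex. -/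
noncomputable def supSigmaVal (G : MPGame V) (X : Set V) (v : V) : EReal :=
  G.minVal (supSigma X) v

/-- The `infΣ^X`-value of a vertex. -/
noncomputable def infSigmaVal (G : MPGame V) (X : Set V) (v : V) : EReal :=
  G.minVal (infSigma X) v

/-- `G` has no cycle of total weight zero: no path repeats a vertex with the
same partial sum of weights. -/
def NoZeroCycle (G : MPGame V) : Prop :=
  ∀ (π : G.Path) (i j : ℕ), i < j → π.vert i = π.vert j → π.wsum i ≠ π.wsum j

/-- The zone `N` of the subgame of `G` induced on `D`: vertices whose
immediately optimal edges (within `D`) have weight `< 0`. -/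
def NsetOn (G : MPGame V) (D : Set V) : Set V :=
  {v | v ∈ D ∧ ((G.IsMin v ∧ ∃ v' ∈ D, G.E v v' ∧ G.w v v' < 0) ∨
      (¬ G.IsMin v ∧ ∀ v' ∈ D, G.E v v' → G.w v v' < 0))}

/-- The zone `P` of the subgame of `G` induced on `D`. -/
def PsetOn (G : MPGame V) (D : Set V) : Set V :=
  {v | v ∈ D ∧ ((¬ G.IsMin v ∧ ∃ v' ∈ D, G.E v v' ∧ 0 < G.w v v') ∨
      (G.IsMin v ∧ ∀ v' ∈ D, G.E v v' → 0 < G.w v v'))}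

/-- The zone `N` of `G`. -/
def Nset (G : MPGame V) : Set V := G.NsetOn Set.univ

/-- The zone `P` of `G`. -/
def Pset (G : MPGame V) : Set V := G.PsetOn Set.univ

/-- The zone `ZN` of the subgame of `G` induced on `D`: vertices from which
Min can force that an edge of weight `< 0` is visited before any edge of
weight `> 0` (staying within `D`). -/
inductive ZNr (G : MPGame V) (D : Set V) : V → Prop
  | minNeg (v v' : V) : v ∈ D → G.IsMin v → v' ∈ D → G.E v v' → G.w v v' < 0 →
      ZNr G D v
  | minZero (v v' : V) : v ∈ D → G.IsMin v → v' ∈ D → G.E v v' → G.w v v' = 0 →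
      ZNr G D v' → ZNr G D v
  | max (v : V) : v ∈ D → ¬ G.IsMin v →
      (∀ v' ∈ D, G.E v v' → G.w v v' ≤ 0) →
      (∀ v', v' ∈ D → G.E v v' → G.w v v' = 0 → ZNr G D v') →
      ZNr G D v

/-- The zone `ZP` of the subgame of `G` induced on `D`. -/
inductive ZPr (G : MPGame V) (D : Set V) : V → Prop
  | maxPos (v v' : V) : v ∈ D → ¬ G.IsMin v → v' ∈ D → G.E v v' → 0 < G.w v v' →
      ZPr G D v
  | maxZero (v v' : V) : v ∈ D → ¬ G.IsMin v → v' ∈ D → G.E v v' → G.w v v' = 0 →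
      ZPr G D v' → ZPr G D v
  | min (v : V) : v ∈ D → G.IsMin v →
      (∀ v' ∈ D, G.E v v' → 0 ≤ G.w v v') →
      (∀ v', v' ∈ D → G.E v v' → G.w v v' = 0 → ZPr G D v') →
      ZPr G D v

/-- The zone `ZN` of `G`. -/
def ZN (G : MPGame V) : V → Prop := G.ZNr Set.univ

/-- The zone `ZP` of `G`. -/
def ZP (G : MPGame V) : V → Prop := G.ZPr Set.univ

/-- The subgame of `G` induced on `D` is reduced: from every vertex of `ZN`,
Min can force that the first edge visited has weight `≤ 0` and leads into
`ZN`, and symmetrically for `ZP` and Max. -/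
def ReducedOn (G : MPGame V) (D : Set V) : Prop :=
  (∀ v, G.ZNr D v →
     (G.IsMin v → ∃ v' ∈ D, G.E v v' ∧ G.w v v' ≤ 0 ∧ G.ZNr D v') ∧
     (¬ G.IsMin v → ∀ v' ∈ D, G.E v v' → G.w v v' ≤ 0 ∧ G.ZNr D v')) ∧
  (∀ v, G.ZPr D v →
     (¬ G.IsMin v → ∃ v' ∈ D, G.E v v' ∧ 0 ≤ G.w v v' ∧ G.ZPr D v') ∧
     (G.IsMin v → ∀ v' ∈ D, G.E v v' → 0 ≤ G.w v v' ∧ G.ZPr D v'))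

/-- `G` is reduced. -/
def Reduced (G : MPGame V) : Prop := G.ReducedOn Set.univ

/-- The subgame of `G` induced on `D` is positively reduced: `ZN = ∅`. -/
def PosReducedOn (G : MPGame V) (D : Set V) : Prop := ∀ v, ¬ G.ZNr D v

/-- `A` is a trap for Min: a sinkless subgraph from which Min cannot escape. -/
def TrapForMin (G : MPGame V) (A : Set V) : Prop :=
  (∀ v ∈ A, ∃ v' ∈ A, G.E v v') ∧
  ∀ v ∈ A, G.IsMin v → ∀ v', G.E v v' → v' ∈ A

/-- `A` is a trap for Max: a sinkless subgraph from which Max cannot escape. -/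
def TrapForMax (G : MPGame V) (A : Set V) : Prop :=
  (∀ v ∈ A, ∃ v' ∈ A, G.E v v') ∧
  ∀ v ∈ A, ¬ G.IsMin v → ∀ v', G.E v v' → v' ∈ A

/-- The potential reduction of `G` by the potential `φ`. -/
def pot (G : MPGame V) (φ : V → ℤ) : MPGame V where
  E := G.E
  w := fun v v' => G.w v v' + φ v' - φ v
  IsMin := G.IsMin
  sinkless := G.sinkless

end MPGame

namespace MPGame
variable {V : Type*}

noncomputable def J (n : ℤ) : EReal := ((n : ℝ) : EReal)

lemma J_add (a b : ℤ) : J (a + b) = J a + J b := by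
  unfold J; push_cast; rfl

lemma J_mono {a b : ℤ} (h : a ≤ b) : J a ≤ J b := by
  unfold J; exact_mod_cast h

lemma J_nonneg {a : ℤ} (h : 0 ≤ a) : 0 ≤ J a := by
  unfold J; exact_mod_cast h

lemma J_ne_bot (a : ℤ) : J a ≠ ⊥ := by unfold J; exact EReal.coe_ne_bot _
lemma J_ne_top (a : ℤ) : J a ≠ ⊤ := by unfold J; exact EReal.coe_ne_top _

lemma add_J_le_iff {a T : EReal} (c : ℤ) : a + J c ≤ T ↔ a ≤ T - J c :=
  (EReal.le_sub_iff_add_le (Or.inl (J_ne_bot c)) (Or.inl (J_ne_top c))).symm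

lemma J_add_iSup_le {ι : Sort*} (c : ℤ) (f : ι → EReal) (T : EReal)
    (h : ∀ i, J c + f i ≤ T) : J c + (⨆ i, f i) ≤ T := by
  rw [add_comm, add_J_le_iff]
  exact iSup_le fun i => (add_J_le_iff c).1 (by rw [add_comm]; exact h i)

noncomputable def followPath (G : MPGame V) {σ : V → V} (hσ : G.Legal σ) (u : V) : G.Path :=
  ⟨fun n => σ^[n] u, fun n => by
    show G.E (σ^[n] u) (σ^[n+1] u)
    rw [Function.iterate_succ_apply']; exact hσ _⟩

lemma followPath_zero (G : MPGame V) {σ : V → V} (hσ : G.Legal σ) (u : V) :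
    (G.followPath hσ u).vert 0 = u := rfl

lemma followPath_cons (G : MPGame V) {σ : V → V} (hσ : G.Legal σ) (u : V) :
    (G.followPath hσ u).ConsMin σ := by
  intro i _
  show σ^[i+1] u = σ (σ^[i] u)
  rw [Function.iterate_succ_apply']

lemma supSigma_nonneg (G : MPGame V) (X : Set V) (π : G.Path) : 0 ≤ G.supSigma X π := by
  have h0 : ∀ i < 0, π.vert i ∉ X := by omega
  have h1 : ((π.wsum 0 : ℝ) : EReal) ≤ G.supSigma X π :=
    le_iSup (fun k : {k : ℕ // ∀ i < k, π.vert i ∉ X} => ((π.wsum k.1 : ℝ) : EReal)) ⟨0, h0⟩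
  simpa [Path.wsum] using h1

lemma supSigmaVal_nonneg (G : MPGame V) (X : Set V) (u : V) : 0 ≤ G.supSigmaVal X u := by
  refine le_iInf fun σ => ?_
  refine le_trans (G.supSigma_nonneg X (G.followPath σ.2 u)) ?_
  exact le_iSup (fun π : {π : G.Path // π.vert 0 = u ∧ π.ConsMin σ.1} => G.supSigma X π.1)
    ⟨G.followPath σ.2 u, G.followPath_zero σ.2 u, G.followPath_cons σ.2 u⟩


/-- Prepend a vertex to a path. -/
def prepend (G : MPGame V) (x : V) (ρ : G.Path) (h : G.E x (ρ.vert 0)) : G.Path :=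
  ⟨fun n => match n with | 0 => x | (k+1) => ρ.vert k,
   fun n => by cases n with
     | zero => exact h
     | succ k => exact ρ.adj k⟩

lemma prepend_wsum (G : MPGame V) (x : V) (ρ : G.Path) (h : G.E x (ρ.vert 0)) (k : ℕ) :
    (G.prepend x ρ h).wsum (k + 1) = G.w x (ρ.vert 0) + ρ.wsum k := by
  unfold Path.wsum
  rw [Finset.sum_range_succ']
  simp [prepend, add_comm]

/-- The inner sup in `minVal` for a fixed strategy. -/
noncomputable def SSup (G : MPGame V) (X : Set V) (σ : V → V) (u : V) : EReal :=
  ⨆ π : {π : G.Path // π.vert 0 = u ∧ π.ConsMin σ}, G.supSigma X π.1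

lemma supSigmaVal_eq_iInf (G : MPGame V) (X : Set V) (u : V) :
    G.supSigmaVal X u = ⨅ σ : {σ : V → V // G.Legal σ}, G.SSup X σ.1 u := rfl

lemma supSigmaVal_le (G : MPGame V) (X : Set V) {σ : V → V} (hσ : G.Legal σ) (u : V) :
    G.supSigmaVal X u ≤ G.SSup X σ u := by
  rw [supSigmaVal_eq_iInf]
  exact iInf_le (fun σ' : {σ' : V → V // G.Legal σ'} => G.SSup X σ'.1 u) ⟨σ, hσ⟩

/-- Prepending inequality on the strategy sup. -/
lemma SSup_prepend (G : MPGame V) (X : Set V) {σ : V → V} {x y : V}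
    (hx : x ∉ X) (hE : G.E x y) (hσy : G.IsMin x → σ x = y) :
    J (G.w x y) + G.SSup X σ y ≤ G.SSup X σ x := by
  refine J_add_iSup_le _ _ _ ?_
  rintro ⟨ρ, hρ0, hρc⟩
  have hE' : G.E x (ρ.vert 0) := hρ0 ▸ hE
  set π := G.prepend x ρ hE' with hπ
  have hπ0 : π.vert 0 = x := rfl
  have hπc : π.ConsMin σ := by
    intro i hi
    cases i with
    | zero =>
        show ρ.vert 0 = σ x
        rw [hρ0, hσy hi]
    | succ k => exact hρc k hi
  have key : J (G.w x y) + G.supSigma X ρ ≤ G.supSigma X π := by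
    refine J_add_iSup_le _ _ _ ?_
    rintro ⟨k, hk⟩
    have hk' : ∀ i < k + 1, π.vert i ∉ X := by
      intro i hi
      cases i with
      | zero => exact hx
      | succ j => exact hk j (by omega)
    have : ((π.wsum (k+1) : ℝ) : EReal) ≤ G.supSigma X π :=
      le_iSup (fun k : {k : ℕ // ∀ i < k, π.vert i ∉ X} => ((π.wsum k.1 : ℝ) : EReal)) ⟨k+1, hk'⟩
    refine le_trans (le_of_eq ?_) this
    show J (G.w x y) + ((ρ.wsum k : ℝ) : EReal) = ((π.wsum (k+1) : ℝ) : EReal)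
    rw [G.prepend_wsum x ρ hE' k, hρ0]
    show J (G.w x y) + J (ρ.wsum k) = J (G.w x y + ρ.wsum k)
    rw [J_add]
  refine le_trans key ?_
  exact le_iSup (fun π' : {π' : G.Path // π'.vert 0 = x ∧ π'.ConsMin σ} => G.supSigma X π'.1)
    ⟨π, hπ0, hπc⟩

/-- Bellman inequality at Max vertices. -/
lemma bellMax (G : MPGame V) (X : Set V) {x y : V}
    (hx : x ∉ X) (hm : ¬ G.IsMin x) (hE : G.E x y) :
    J (G.w x y) + G.supSigmaVal X y ≤ G.supSigmaVal X x := by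
  rw [supSigmaVal_eq_iInf G X x]
  refine le_iInf ?_
  rintro ⟨σ, hσ⟩
  calc J (G.w x y) + G.supSigmaVal X y
      ≤ J (G.w x y) + G.SSup X σ y := add_le_add_right (G.supSigmaVal_le X hσ y) _
    _ ≤ G.SSup X σ x := G.SSup_prepend X hx hE (fun h => absurd h hm)

/-- Existence of an optimal strategy at each vertex. -/
lemma exists_opt (G : MPGame V) [Fintype V] (X : Set V) (u : V) :
    ∃ σ : V → V, G.Legal σ ∧ G.SSup X σ u = G.supSigmaVal X u := by
  classical
  haveI : Finite {σ : V → V // G.Legal σ} := Subtype.finite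
  haveI : Nonempty {σ : V → V // G.Legal σ} :=
    ⟨⟨fun w => Classical.choose (G.sinkless w), fun w => Classical.choose_spec (G.sinkless w)⟩⟩
  obtain ⟨σ0, hσ0⟩ := Finite.exists_min (fun σ : {σ : V → V // G.Legal σ} => G.SSup X σ.1 u)
  refine ⟨σ0.1, σ0.2, le_antisymm ?_ (G.supSigmaVal_le X σ0.2 u)⟩
  rw [supSigmaVal_eq_iInf]
  exact le_iInf hσ0

/-- Bellman inequality at Min vertices, for a strategy optimal at `x`. -/
lemma bellMin (G : MPGame V) (X : Set V) {x : V} {σ : V → V}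
    (hx : x ∉ X) (hm : G.IsMin x) (hσ : G.Legal σ) (hopt : G.SSup X σ x = G.supSigmaVal X x) :
    J (G.w x (σ x)) + G.supSigmaVal X (σ x) ≤ G.supSigmaVal X x := by
  rw [← hopt]
  calc J (G.w x (σ x)) + G.supSigmaVal X (σ x)
      ≤ J (G.w x (σ x)) + G.SSup X σ (σ x) := add_le_add_right (G.supSigmaVal_le X hσ _) _
    _ ≤ G.SSup X σ x := G.SSup_prepend X hx (hσ x) (fun _ => rfl)


/-- Telescoping upper bound: a strategy certified by a "potential" `h`. -/
lemma tel (G : MPGame V) (X : Set V) (σ : V → V) (h : V → EReal)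
    (h0 : ∀ u, 0 ≤ h u)
    (hMin : ∀ x, x ∉ X → G.IsMin x → J (G.w x (σ x)) + h (σ x) ≤ h x)
    (hMax : ∀ x y, x ∉ X → ¬ G.IsMin x → G.E x y → J (G.w x y) + h y ≤ h x)
    (π : G.Path) (hπ : π.ConsMin σ) : G.supSigma X π ≤ h (π.vert 0) := by
  have main : ∀ k, (∀ i < k, π.vert i ∉ X) → J (π.wsum k) + h (π.vert k) ≤ h (π.vert 0) := by
    intro k
    induction k with
    | zero =>
        intro _
        have : J (π.wsum 0) = 0 := by simp [Path.wsum, J]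
        rw [this, zero_add]
    | succ k ih =>
        intro hk
        have hk' : ∀ i < k, π.vert i ∉ X := fun i hi => hk i (by omega)
        have hkX : π.vert k ∉ X := hk k (by omega)
        have hw : π.wsum (k+1) = π.wsum k + G.w (π.vert k) (π.vert (k+1)) := by
          unfold Path.wsum
          rw [Finset.sum_range_succ]
        have hstep : J (G.w (π.vert k) (π.vert (k+1))) + h (π.vert (k+1)) ≤ h (π.vert k) := by
          by_cases hm : G.IsMin (π.vert k)
          · rw [hπ k hm]
            exact hMin (π.vert k) hkX hm
          · exact hMax (π.vert k) (π.vert (k+1)) hkX hm (π.adj k)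
        calc J (π.wsum (k+1)) + h (π.vert (k+1))
            = J (π.wsum k) + (J (G.w (π.vert k) (π.vert (k+1))) + h (π.vert (k+1))) := by
              rw [hw, J_add, add_assoc]
          _ ≤ J (π.wsum k) + h (π.vert k) := add_le_add_right hstep _
          _ ≤ h (π.vert 0) := ih hk'
  refine iSup_le ?_
  rintro ⟨k, hk⟩
  show J (π.wsum k) ≤ h (π.vert 0)
  calc J (π.wsum k) = J (π.wsum k) + 0 := (add_zero _).symm
    _ ≤ J (π.wsum k) + h (π.vert k) := add_le_add_right (h0 _) _
    _ ≤ h (π.vert 0) := main k hk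

lemma val_le_of_tel (G : MPGame V) (X : Set V) {σ : V → V} (hσ : G.Legal σ) (h : V → EReal)
    (h0 : ∀ u, 0 ≤ h u)
    (hMin : ∀ x, x ∉ X → G.IsMin x → J (G.w x (σ x)) + h (σ x) ≤ h x)
    (hMax : ∀ x y, x ∉ X → ¬ G.IsMin x → G.E x y → J (G.w x y) + h y ≤ h x)
    (u : V) : G.supSigmaVal X u ≤ h u := by
  refine le_trans (G.supSigmaVal_le X hσ u) ?_
  refine iSup_le ?_
  rintro ⟨π, hπ0, hπc⟩
  have := G.tel X σ h h0 hMin hMax π hπc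
  rwa [hπ0] at this


end MPGame

open MPGame in
/-- second part of Lemma 3b: with `F ⊇ N` as before,
`H = G ∖ F` a subgame with reducing potential `φ_H`, `H⁺` empty and `H⁻`
nonempty, if `vv'` is an edge from `H⁻ ∩ V_Max` to `F` maximising
`w(vv') + supΣ^N(v') − φ_H(v)`, then `supΣ^N(v) = supΣ^N(v') + w(vv')`. -/
theorem statement12 {V : Type*} [Fintype V] (G : MPGame V)
    (hz : G.NoZeroCycle)
    (F : Set V) (hNF : G.Nset ⊆ F)
    (g : V → ℤ) (hg : ∀ u ∈ F, G.supSigmaVal G.Nset u = ((g u : ℝ) : EReal))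
    (hsub : ∀ u ∈ Fᶜ, ∃ u' ∈ Fᶜ, G.E u u')
    (φH : V → ℤ) (hred : (G.pot φH).ReducedOn Fᶜ)
    (hplus : ∀ u, ¬ (G.pot φH).ZPr Fᶜ u)
    (hminus : ∃ u, (G.pot φH).ZNr Fᶜ u)
    (v v' : V)
    (hv : (G.pot φH).ZNr Fᶜ v) (hvMax : ¬ G.IsMin v)
    (hvv' : G.E v v') (hv'F : v' ∈ F)
    (hmax : ∀ u u', (G.pot φH).ZNr Fᶜ u → ¬ G.IsMin u → G.E u u' → u' ∈ F →
      G.w u u' + g u' - φH u ≤ G.w v v' + g v' - φH v) :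
    G.supSigmaVal G.Nset v = ((g v' + G.w v v' : ℝ) : EReal) := by
  classical
  set C : ℤ := G.w v v' + g v' - φH v with hC
  -- basic facts
  have hZNFc : ∀ x, (G.pot φH).ZNr Fᶜ x → x ∈ Fᶜ := by
    intro x hx; cases hx <;> assumption
  have hnotN : ∀ x, x ∈ Fᶜ → x ∉ G.Nset := fun x hx hn => hx (hNF hn)
  have hMinPos : ∀ x, x ∈ Fᶜ → G.IsMin x → ∀ y, G.E x y → 0 ≤ G.w x y := by
    intro x hx hm y hEy
    by_contra hneg
    exact hnotN x hx ⟨trivial, Or.inl ⟨hm, y, trivial, hEy, by omega⟩⟩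
  have hMaxEx : ∀ x, x ∈ Fᶜ → ¬ G.IsMin x → ∃ y, G.E x y ∧ 0 ≤ G.w x y := by
    intro x hx hm
    by_contra hneg
    push_neg at hneg
    exact hnotN x hx ⟨trivial, Or.inr ⟨hm, fun y _ hEy => hneg y hEy⟩⟩
  have hg0 : ∀ u ∈ F, 0 ≤ g u := by
    intro u hu
    have h1 := G.supSigmaVal_nonneg G.Nset u
    rw [hg u hu] at h1
    exact_mod_cast h1
  -- reducedness, unpacked with real weights
  have hredMin : ∀ x, (G.pot φH).ZNr Fᶜ x → G.IsMin x →
      ∃ y, y ∈ Fᶜ ∧ G.E x y ∧ G.w x y + φH y - φH x ≤ 0 ∧ (G.pot φH).ZNr Fᶜ y := by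
    intro x hx hm
    obtain ⟨y, hy1, hy2, hy3, hy4⟩ := (hred.1 x hx).1 hm
    exact ⟨y, hy1, hy2, hy3, hy4⟩
  have hredMax : ∀ x, (G.pot φH).ZNr Fᶜ x → ¬ G.IsMin x → ∀ y, y ∈ Fᶜ → G.E x y →
      G.w x y + φH y - φH x ≤ 0 ∧ (G.pot φH).ZNr Fᶜ y := by
    intro x hx hm y hy hEy
    exact (hred.1 x hx).2 hm y hy hEy
  -- Key: C + φH is nonnegative on ZN
  have key : ∀ x, (G.pot φH).ZNr Fᶜ x → 0 ≤ C + φH x := by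
    by_contra hcon
    push_neg at hcon
    obtain ⟨x0, hx0Z, hx0neg⟩ := hcon
    have step : ∀ p : {x : V // (G.pot φH).ZNr Fᶜ x ∧ C + φH x < 0},
        ∃ q : {x : V // (G.pot φH).ZNr Fᶜ x ∧ C + φH x < 0},
          G.E p.1 q.1 ∧ 0 ≤ G.w p.1 q.1 ∧ G.w p.1 q.1 + φH q.1 - φH p.1 ≤ 0 := by
      rintro ⟨x, hxZ, hxneg⟩
      by_cases hm : G.IsMin x
      · obtain ⟨y, hy1, hy2, hy3, hy4⟩ := hredMin x hxZ hm
        have hw0 : 0 ≤ G.w x y := hMinPos x (hZNFc x hxZ) hm y hy2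
        exact ⟨⟨y, hy4, by omega⟩, hy2, hw0, hy3⟩
      · obtain ⟨y, hEy, hw0⟩ := hMaxEx x (hZNFc x hxZ) hm
        by_cases hyF : y ∈ F
        · exfalso
          have h1 := hmax x y hxZ hm hEy hyF
          have h2 := hg0 y hyF
          omega
        · obtain ⟨hy3, hy4⟩ := hredMax x hxZ hm y hyF hEy
          exact ⟨⟨y, hy4, by omega⟩, hEy, hw0, hy3⟩
    choose stepF hE1 hw1 hpw1 using step
    set p0 : {x : V // (G.pot φH).ZNr Fᶜ x ∧ C + φH x < 0} := ⟨x0, hx0Z, hx0neg⟩ with hp0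
    set seq : ℕ → {x : V // (G.pot φH).ZNr Fᶜ x ∧ C + φH x < 0} := fun n => stepF^[n] p0 with hseqdef
    have hseq : ∀ n, seq (n+1) = stepF (seq n) := by
      intro n
      simp only [hseqdef]
      exact Function.iterate_succ_apply' _ _ _
    let π : G.Path := ⟨fun n => (seq n).1, fun n => by show G.E (seq n).1 (seq (n+1)).1; rw [hseq n]; exact hE1 (seq n)⟩
    have hvert : ∀ n, π.vert n = (seq n).1 := fun n => rfl
    have hwn : ∀ n, 0 ≤ G.w (π.vert n) (π.vert (n+1)) := by
      intro n
      have := hw1 (seq n)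
      rw [hvert n, hvert (n+1), hseq n]
      exact this
    have hpwn : ∀ n, G.w (π.vert n) (π.vert (n+1)) + φH (π.vert (n+1)) - φH (π.vert n) ≤ 0 := by
      intro n
      have := hpw1 (seq n)
      rw [hvert n, hvert (n+1), hseq n]
      exact this
    have hwsum : ∀ n, π.wsum (n+1) = π.wsum n + G.w (π.vert n) (π.vert (n+1)) := by
      intro n; unfold MPGame.Path.wsum; rw [Finset.sum_range_succ]
    have mono1 : ∀ a b : ℕ, a ≤ b → π.wsum a ≤ π.wsum b := by
      intro a b hab
      induction b, hab using Nat.le_induction with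
      | base => exact le_rfl
      | succ n hn ih =>
        have h1 := hwn n
        rw [hwsum n]; omega
    have mono2 : ∀ a b : ℕ, a ≤ b →
        π.wsum b + φH (π.vert b) ≤ π.wsum a + φH (π.vert a) := by
      intro a b hab
      induction b, hab using Nat.le_induction with
      | base => exact le_rfl
      | succ n hn ih =>
        have h1 := hpwn n
        rw [hwsum n]; omega
    obtain ⟨i, j, hne, heq⟩ := Finite.exists_ne_map_eq_of_infinite (fun n : ℕ => π.vert n)
    rcases lt_or_gt_of_ne hne with hlt | hlt
    · have e1 := mono1 i j (le_of_lt hlt)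
      have e2 := mono2 i j (le_of_lt hlt)
      rw [heq] at e2
      exact hz π i j hlt heq (by omega)
    · have e1 := mono1 j i (le_of_lt hlt)
      have e2 := mono2 j i (le_of_lt hlt)
      rw [← heq] at e2
      exact hz π j i hlt heq.symm (by omega)
  -- pointwise optimal strategies
  have hopt : ∀ u, ∃ σ, G.Legal σ ∧ G.SSup G.Nset σ u = G.supSigmaVal G.Nset u :=
    fun u => G.exists_opt G.Nset u
  choose σopt hoptL hoptE using hopt
  choose sel hsel1 hsel2 hsel3 hsel4 using hredMin
  set h : V → EReal := fun x =>
    if (G.pot φH).ZNr Fᶜ x then min (G.supSigmaVal G.Nset x) (J (C + φH x))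
    else G.supSigmaVal G.Nset x with hh
  set σ : V → V := fun x =>
    if hc : (G.pot φH).ZNr Fᶜ x ∧ G.IsMin x ∧ J (C + φH x) ≤ G.supSigmaVal G.Nset x
    then sel x hc.1 hc.2.1
    else σopt x x with hσdef
  have hσL' : G.Legal σ := by
    intro x
    simp only [hσdef]
    split
    · next hc => exact hsel2 x hc.1 hc.2.1
    · exact hoptL x x
  have hhf : ∀ u, h u ≤ G.supSigmaVal G.Nset u := by
    intro u; simp only [hh]; split
    · exact min_le_left _ _
    · exact le_rfl
  have h0 : ∀ u, 0 ≤ h u := by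
    intro u; simp only [hh]; split
    · next hZ => exact le_min (G.supSigmaVal_nonneg _ _) (J_nonneg (key u hZ))
    · exact G.supSigmaVal_nonneg _ _
  have hMaxCond : ∀ x y, x ∉ G.Nset → ¬ G.IsMin x → G.E x y →
      J (G.w x y) + h y ≤ h x := by
    intro x y hxN hm hEy
    by_cases hZ : (G.pot φH).ZNr Fᶜ x
    · have hxeq : h x = min (G.supSigmaVal G.Nset x) (J (C + φH x)) := by
        simp only [hh]; rw [if_pos hZ]
      rw [hxeq]
      refine le_min ?_ ?_
      · calc J (G.w x y) + h y
            ≤ J (G.w x y) + G.supSigmaVal G.Nset y := add_le_add_right (hhf y) _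
          _ ≤ G.supSigmaVal G.Nset x := G.bellMax G.Nset hxN hm hEy
      · by_cases hyF : y ∈ F
        · have hyZ : ¬ (G.pot φH).ZNr Fᶜ y := fun h' => (hZNFc y h') hyF
          have hyeq : h y = J (g y) := by simp only [hh]; rw [if_neg hyZ]; exact hg y hyF
          rw [hyeq, ← J_add]
          exact J_mono (by have := hmax x y hZ hm hEy hyF; omega)
        · obtain ⟨hp, hyZ⟩ := hredMax x hZ hm y hyF hEy
          have hyle : h y ≤ J (C + φH y) := by
            simp only [hh]; rw [if_pos hyZ]; exact min_le_right _ _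
          calc J (G.w x y) + h y
              ≤ J (G.w x y) + J (C + φH y) := add_le_add_right hyle _
            _ ≤ J (C + φH x) := by rw [← J_add]; exact J_mono (by omega)
    · have hxeq : h x = G.supSigmaVal G.Nset x := by simp only [hh]; rw [if_neg hZ]
      rw [hxeq]
      calc J (G.w x y) + h y
          ≤ J (G.w x y) + G.supSigmaVal G.Nset y := add_le_add_right (hhf y) _
        _ ≤ G.supSigmaVal G.Nset x := G.bellMax G.Nset hxN hm hEy
  have hMinCond : ∀ x, x ∉ G.Nset → G.IsMin x → J (G.w x (σ x)) + h (σ x) ≤ h x := by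
    intro x hxN hm
    by_cases hc : (G.pot φH).ZNr Fᶜ x ∧ G.IsMin x ∧ J (C + φH x) ≤ G.supSigmaVal G.Nset x
    · have hσx : σ x = sel x hc.1 hc.2.1 := by simp only [hσdef]; rw [dif_pos hc]
      have hxeq : h x = J (C + φH x) := by
        simp only [hh]; rw [if_pos hc.1]; exact min_eq_right hc.2.2
      rw [hσx, hxeq]
      have h3 := hsel3 x hc.1 hc.2.1
      have h4 := hsel4 x hc.1 hc.2.1
      have hyle : h (sel x hc.1 hc.2.1) ≤ J (C + φH (sel x hc.1 hc.2.1)) := by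
        simp only [hh]; rw [if_pos h4]; exact min_le_right _ _
      calc J (G.w x (sel x hc.1 hc.2.1)) + h (sel x hc.1 hc.2.1)
          ≤ J (G.w x (sel x hc.1 hc.2.1)) + J (C + φH (sel x hc.1 hc.2.1)) :=
            add_le_add_right hyle _
        _ ≤ J (C + φH x) := by rw [← J_add]; exact J_mono (by omega)
    · have hσx : σ x = σopt x x := by simp only [hσdef]; rw [dif_neg hc]
      have hxeq : h x = G.supSigmaVal G.Nset x := by
        simp only [hh]
        by_cases hZ : (G.pot φH).ZNr Fᶜ x
        · rw [if_pos hZ]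
          have hnle : ¬ J (C + φH x) ≤ G.supSigmaVal G.Nset x := fun hle => hc ⟨hZ, hm, hle⟩
          exact min_eq_left (le_of_lt (not_le.mp hnle))
        · rw [if_neg hZ]
      rw [hσx, hxeq]
      calc J (G.w x (σopt x x)) + h (σopt x x)
          ≤ J (G.w x (σopt x x)) + G.supSigmaVal G.Nset (σopt x x) :=
            add_le_add_right (hhf _) _
        _ ≤ G.supSigmaVal G.Nset x := G.bellMin G.Nset hxN hm (hoptL x) (hoptE x)
  have hup : G.supSigmaVal G.Nset v ≤ J (C + φH v) := by
    refine le_trans (G.val_le_of_tel G.Nset hσL' h h0 hMinCond hMaxCond v) ?_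
    simp only [hh]; rw [if_pos hv]; exact min_le_right _ _
  have hlow : J (C + φH v) ≤ G.supSigmaVal G.Nset v := by
    have hb := G.bellMax G.Nset (hnotN v (hZNFc v hv)) hvMax hvv'
    rw [hg v' hv'F] at hb
    have heq : J (C + φH v) = J (G.w v v') + J (g v') := by
      rw [← J_add]; congr 1; omega
    rw [heq]
    exact hb
  have hfin : G.supSigmaVal G.Nset v = J (C + φH v) := le_antisymm hup hlow
  rw [hfin]
  show (((C + φH v : ℤ) : ℝ) : EReal) = ((g v' + G.w v v' : ℝ) : EReal)
  congr 1
  push_cast [hC]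
  ring
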